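/- If a + b > c + q + 2, then (a−q−1)(b−q−1)·₃F₂(1,c,q; a,b; 1) + q(a+b−c−2−q)·₃F₂(1,c,q+1; a,b; 1) = (a−1)(b−1). -/

import Mathlib

noncomputable def poch (a : ℝ) (n : ℕ) : ℝ := (ascPochhammer ℝ n).eval a

/-- Generalized hypergeometric series ₃F₂(a,b,c; d,e; x). -/
noncomputable def F32 (a b c d e x : ℝ) : ℝ :=
  ∑' n : ℕ, (poch a n * poch b n * poch c n) / (poch d n * poch e n * (n.factorial : ℝ)) * x ^ n

/-- `x` is not a non-positive integer. -/
def NotNonposInt (x : ℝ) : Prop := ∀ m : ℕ, x ≠ -(m : ℝ)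

lemma poch_zero (a : ℝ) : poch a 0 = 1 := by simp [poch]

lemma poch_succ (a : ℝ) (n : ℕ) : poch a (n+1) = poch a n * (a + n) :=
  ascPochhammer_succ_eval n a

lemma poch_one_eval (n : ℕ) : poch 1 n = (n.factorial : ℝ) := by simp [poch]

lemma poch_ne_zero {a : ℝ} (ha : NotNonposInt a) (n : ℕ) : poch a n ≠ 0 := by
  induction n with
  | zero => simp [poch_zero]
  | succ n ih =>
    rw [poch_succ]
    exact mul_ne_zero ih (fun hcon => ha n (by linarith))

lemma poch_shift (q : ℝ) (n : ℕ) : q * poch (q+1) n = (q + n) * poch q n := by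
  induction n with
  | zero => simp [poch_zero]
  | succ n ih =>
    rw [poch_succ, poch_succ, ← mul_assoc, ih]
    push_cast
    ring

noncomputable def tt (a b c q : ℝ) (n : ℕ) : ℝ :=
  poch c n * poch q n / (poch a n * poch b n)

lemma tt_succ {a b c q : ℝ} (ha : NotNonposInt a) (hb : NotNonposInt b) (n : ℕ) :
    tt a b c q (n+1) = tt a b c q n * ((c + n) * (q + n)) / ((a + n) * (b + n)) := by
  have h1 := poch_ne_zero ha n
  have h2 := poch_ne_zero hb n
  have h3 : a + n ≠ 0 := fun hcon => ha n (by linarith)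
  have h4 : b + n ≠ 0 := fun hcon => hb n (by linarith)
  simp only [tt, poch_succ]
  field_simp

lemma rpow_ratio_aux (p x : ℝ) (hp : 0 < p) (hx : 1 ≤ x) (h2 : 2*p ≤ x+1) :
    ((x+2)/(x+1)) ^ p ≤ (x^2 + p*x + 2*p^2)/x^2 := by
  have hx1 : (0:ℝ) < x + 1 := by linarith
  have hx0 : (0:ℝ) < x := by linarith
  set y : ℝ := p/(x+1) with hy
  have hy0 : 0 < y := div_pos hp hx1
  have hyh : y ≤ 1/2 := by
    rw [hy, div_le_iff₀ hx1]; linarith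
  have hbase : (0:ℝ) < (x+2)/(x+1) := by positivity
  have hlog : Real.log ((x+2)/(x+1)) ≤ 1/(x+1) := by
    have h5 : Real.log ((x+2)/(x+1)) ≤ (x+2)/(x+1) - 1 := Real.log_le_sub_one_of_pos hbase
    have heq : (x+2)/(x+1) - 1 = 1/(x+1) := by
      rw [div_sub' hx1.ne', div_eq_div_iff hx1.ne' hx1.ne']; ring
    linarith [heq ▸ h5]
  have h1 : ((x+2)/(x+1)) ^ p ≤ Real.exp y := by
    rw [Real.rpow_def_of_pos hbase]
    apply Real.exp_le_exp.mpr
    calc Real.log ((x+2)/(x+1)) * p ≤ (1/(x+1)) * p := by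
          exact mul_le_mul_of_nonneg_right hlog hp.le
      _ = y := by rw [hy]; ring
  have h2' : Real.exp y ≤ 1 + y + 2*y^2 := by
    have ha : 1 - y ≤ Real.exp (-y) := by
      have := Real.add_one_le_exp (-y); linarith
    have hb : (0:ℝ) < 1 - y := by linarith
    have hc : Real.exp y ≤ 1/(1-y) := by
      rw [le_div_iff₀ hb]
      calc Real.exp y * (1-y) ≤ Real.exp y * Real.exp (-y) :=
            mul_le_mul_of_nonneg_left ha (Real.exp_pos y).le
        _ = 1 := by rw [← Real.exp_add]; simp
    have hd : 1/(1-y) ≤ 1 + y + 2*y^2 := by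
      rw [div_le_iff₀ hb]; nlinarith
    linarith
  have hyx : y ≤ p/x := by
    apply div_le_div_of_nonneg_left hp.le hx0; linarith
  have h3 : 1 + y + 2*y^2 ≤ (x^2 + p*x + 2*p^2)/x^2 := by
    have hpx : (0:ℝ) ≤ p/x := by positivity
    have h6 : 1 + y + 2*y^2 ≤ 1 + p/x + 2*(p/x)^2 := by nlinarith
    calc 1 + y + 2*y^2 ≤ 1 + p/x + 2*(p/x)^2 := h6
      _ = (x^2 + p*x + 2*p^2)/x^2 := by field_simp
  linarith

set_option maxHeartbeats 1000000 in
lemma ratio_bound (a b c q p s B x : ℝ)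
    (hp : 0 < p) (hs : s = p + 2)
    (hB : B = |a*b - 2*s^2 - (c+q)*s - c*q| + |(c+q)*(2*s^2) + c*q*s| + |2*s^2*(c*q)|)
    (hr : a + b - c - q - 2 = 2*p)
    (hx : 1 ≤ x) (hxc : 0 ≤ x + c) (hxq : 0 ≤ x + q)
    (h2s : 2*s ≤ x + 1) (hpx : B ≤ p*x) :
    (x+2)^s * ((x+c)*(x+q)) ≤ (x+1)^s * ((x+a)*(x+b)) := by
  have hx0 : (0:ℝ) < x := by linarith
  have hx1 : (0:ℝ) < x + 1 := by linarith
  have hx2 : (0:ℝ) < x + 2 := by linarith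
  have hs0 : (0:ℝ) < s := by rw [hs]; linarith
  have hcq : 0 ≤ (x+c)*(x+q) := mul_nonneg hxc hxq
  have hrho := rpow_ratio_aux s x hs0 hx h2s
  have hsplit : (x+2)^s = ((x+2)/(x+1))^s * (x+1)^s := by
    rw [← Real.mul_rpow (by positivity) hx1.le, div_mul_cancel₀ _ hx1.ne']
  have stepB : (x^2+s*x+2*s^2) * ((x+c)*(x+q)) ≤ (x^2)*((x+a)*(x+b)) := by
    have t1 : 0 ≤ ((a*b - 2*s^2 - (c+q)*s - c*q) + |a*b - 2*s^2 - (c+q)*s - c*q|) * x^2 :=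
      mul_nonneg (by linarith [neg_abs_le (a*b - 2*s^2 - (c+q)*s - c*q)]) (sq_nonneg x)
    have t2 : 0 ≤ |(c+q)*(2*s^2) + c*q*s| * x^2 - ((c+q)*(2*s^2) + c*q*s) * x := by
      nlinarith [le_abs_self ((c+q)*(2*s^2) + c*q*s), abs_nonneg ((c+q)*(2*s^2) + c*q*s),
        sq_nonneg (x-1), hx0]
    have t3 : 0 ≤ |2*s^2*(c*q)| * x^2 - 2*s^2*(c*q) := by
      nlinarith [le_abs_self (2*s^2*(c*q)), abs_nonneg (2*s^2*(c*q)), sq_nonneg (x-1)]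
    have t4 : 0 ≤ p*x^3 - (|a*b - 2*s^2 - (c+q)*s - c*q| + |(c+q)*(2*s^2) + c*q*s| + |2*s^2*(c*q)|)*x^2 := by
      have h' := mul_le_mul_of_nonneg_right (hB ▸ hpx) (sq_nonneg x)
      nlinarith [h']
    have hrx : (a+b)*x^3 = (c+q+2+2*p)*x^3 := by rw [show a+b = c+q+2+2*p by linarith]
    have hsx : s*x^3 = (p+2)*x^3 := by rw [hs]
    have hsx2 : s^2*x^2 = (p+2)^2*x^2 := by rw [hs]
    linarith [t1, t2, t3, t4, hrx, hsx, hsx2]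
  have key : ((x+2)/(x+1))^s * ((x+c)*(x+q)) ≤ (x+a)*(x+b) := by
    calc ((x+2)/(x+1))^s * ((x+c)*(x+q))
        ≤ ((x^2+s*x+2*s^2)/x^2) * ((x+c)*(x+q)) :=
          mul_le_mul_of_nonneg_right hrho hcq
      _ ≤ (x+a)*(x+b) := by
          rw [div_mul_eq_mul_div, div_le_iff₀ (by positivity)]
          calc (x^2+s*x+2*s^2) * ((x+c)*(x+q)) ≤ (x^2)*((x+a)*(x+b)) := stepB
            _ = (x+a)*(x+b) * x^2 := by ring
  calc (x+2)^s * ((x+c)*(x+q))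
      = (x+1)^s * (((x+2)/(x+1))^s * ((x+c)*(x+q))) := by rw [hsplit]; ring
    _ ≤ (x+1)^s * ((x+a)*(x+b)) :=
        mul_le_mul_of_nonneg_left key (Real.rpow_nonneg hx1.le s)

lemma weight_bounded (a b c q : ℝ) (ha : NotNonposInt a) (hb : NotNonposInt b)
    (h : a + b > c + q + 2) :
    ∃ C : ℝ, 0 ≤ C ∧ ∀ n : ℕ,
      ((n:ℝ)+1) ^ ((a+b-c-q-2)/2 + 2) * |tt a b c q n| ≤ C := by
  set p : ℝ := (a+b-c-q-2)/2 with hpdef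
  have hp0 : 0 < p := by rw [hpdef]; linarith
  set s : ℝ := p + 2 with hsdef
  have hs0 : 0 < s := by rw [hsdef]; linarith
  set B : ℝ := |a*b - 2*s^2 - (c+q)*s - c*q| + |(c+q)*(2*s^2) + c*q*s| + |2*s^2*(c*q)| with hBdef
  set t : ℕ → ℝ := tt a b c q with htdef
  set w : ℕ → ℝ := fun n => ((n:ℝ)+1)^s * |t n| with hwdef
  obtain ⟨N, hN⟩ := exists_nat_ge
    (max (max (1:ℝ) (max (-c) (-q))) (max (max (-a+1) (-b+1)) (max (2*s) (B/p))))
  -- decreasing step for n ≥ N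
  have hstep : ∀ n : ℕ, N ≤ n → w (n+1) ≤ w n := by
    intro n hn
    have hcn : (N:ℝ) ≤ (n:ℝ) := Nat.cast_le.mpr hn
    have hR : (max (max (1:ℝ) (max (-c) (-q))) (max (max (-a+1) (-b+1)) (max (2*s) (B/p)))) ≤ (n:ℝ) :=
      le_trans hN hcn
    have h1 : 1 ≤ (n:ℝ) := le_trans (le_trans (le_max_left _ _) (le_max_left _ _)) hR
    have hc' : 0 ≤ (n:ℝ) + c := by
      have := le_trans (le_trans (le_max_left _ _) (le_max_right _ _))
        (le_trans (le_max_left _ _) hR)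
      linarith
    have hq' : 0 ≤ (n:ℝ) + q := by
      have := le_trans (le_trans (le_max_right _ _) (le_max_right _ _))
        (le_trans (le_max_left _ _) hR)
      linarith
    have ha' : 0 < (n:ℝ) + a := by
      have := le_trans (le_trans (le_max_left _ _) (le_max_left _ _))
        (le_trans (le_max_right _ _) hR)
      linarith
    have hb' : 0 < (n:ℝ) + b := by
      have := le_trans (le_trans (le_max_right _ _) (le_max_left _ _))
        (le_trans (le_max_right _ _) hR)
      linarith
    have h2s : 2*s ≤ (n:ℝ) + 1 := by
      have := le_trans (le_trans (le_max_left _ _) (le_max_right _ _))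
        (le_trans (le_max_right _ _) hR)
      linarith
    have hpB : B ≤ p*(n:ℝ) := by
      have h2 : B/p ≤ (n:ℝ) := le_trans (le_trans (le_max_right _ _) (le_max_right _ _))
        (le_trans (le_max_right _ _) hR)
      calc B = (B/p)*p := by field_simp
        _ ≤ (n:ℝ)*p := mul_le_mul_of_nonneg_right h2 hp0.le
        _ = p*(n:ℝ) := by ring
    have hD : 0 < ((n:ℝ)+a)*((n:ℝ)+b) := mul_pos ha' hb'
    have htabs : |t (n+1)| = (((n:ℝ)+c)*((n:ℝ)+q)) * |t n| / (((n:ℝ)+a)*((n:ℝ)+b)) := by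
      rw [htdef, tt_succ ha hb n]
      rw [abs_div, abs_mul,
        abs_of_nonneg (show (0:ℝ) ≤ (c+(n:ℝ))*(q+(n:ℝ)) by nlinarith),
        abs_of_pos (show (0:ℝ) < (a+(n:ℝ))*(b+(n:ℝ)) by nlinarith)]
      ring_nf
    have hrb := ratio_bound a b c q p s B (n:ℝ) hp0 hsdef hBdef (by rw [hpdef]; ring)
      h1 hc' hq' h2s hpB
    have hmul := mul_le_mul_of_nonneg_right hrb
      (div_nonneg (abs_nonneg (t n)) hD.le)
    have e1 : w (n+1) = ((n:ℝ)+2)^s * (((n:ℝ)+c)*((n:ℝ)+q)) *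
        (|t n| / (((n:ℝ)+a)*((n:ℝ)+b))) := by
      rw [hwdef]
      simp only []
      rw [htabs]
      push_cast
      ring
    have e2 : ((n:ℝ)+1)^s * (((n:ℝ)+a)*((n:ℝ)+b)) *
        (|t n| / (((n:ℝ)+a)*((n:ℝ)+b))) = w n := by
      rw [hwdef]
      simp only []
      field_simp
    rw [e1, ← e2]
    exact hmul
  -- global bound
  refine ⟨(Finset.range (N+1)).sup' ⟨0, Finset.mem_range.mpr (Nat.succ_pos N)⟩ w, ?_, ?_⟩
  · have h0 : (0:ℝ) ≤ w 0 := mul_nonneg (Real.rpow_nonneg (by norm_num) s) (abs_nonneg _)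
    exact le_trans h0 (Finset.le_sup' w (Finset.mem_range.mpr (Nat.succ_pos N)))
  · intro n
    show w n ≤ _
    by_cases hn : n ≤ N
    · exact Finset.le_sup' w (Finset.mem_range.mpr (Nat.lt_succ_of_le hn))
    · push_neg at hn
      have hwn : w n ≤ w N := by
        have : ∀ m : ℕ, N ≤ m → w m ≤ w N := by
          intro m hm
          induction m, hm using Nat.le_induction with
          | base => exact le_refl _
          | succ m hm ih => exact le_trans (hstep m hm) ih
        exact this n hn.le
      exact le_trans hwn (Finset.le_sup' w (Finset.mem_range.mpr (Nat.lt_succ_of_le le_rfl)))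

lemma t_decay (a b c q : ℝ) (ha : NotNonposInt a) (hb : NotNonposInt b)
    (h : a + b > c + q + 2) :
    ∃ C : ℝ, 0 ≤ C ∧ ∀ n : ℕ,
      |tt a b c q n| ≤ C / ((n:ℝ)+1) ^ ((a+b-c-q-2)/2 + 2) := by
  obtain ⟨C, hC0, hC⟩ := weight_bounded a b c q ha hb h
  refine ⟨C, hC0, fun n => ?_⟩
  have hpos : (0:ℝ) < ((n:ℝ)+1) ^ ((a+b-c-q-2)/2 + 2) :=
    Real.rpow_pos_of_pos (by positivity) _
  rw [le_div_iff₀ hpos]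
  calc |tt a b c q n| * ((n:ℝ)+1) ^ ((a+b-c-q-2)/2 + 2)
      = ((n:ℝ)+1) ^ ((a+b-c-q-2)/2 + 2) * |tt a b c q n| := by ring
    _ ≤ C := hC n

lemma summable_linear (a b c q : ℝ) (ha : NotNonposInt a) (hb : NotNonposInt b)
    (h : a + b > c + q + 2) :
    Summable (fun n : ℕ => ((n:ℝ)+1) * |tt a b c q n|) := by
  obtain ⟨C, hC0, hC⟩ := t_decay a b c q ha hb h
  set p : ℝ := (a+b-c-q-2)/2 with hpdef
  have hp0 : 0 < p := by rw [hpdef]; linarith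
  have hsum : Summable (fun n : ℕ => C * (1/((n:ℝ)+1) ^ (p+1))) := by
    apply Summable.mul_left
    have h1 : Summable (fun n : ℕ => 1/((n:ℕ):ℝ) ^ (p+1)) :=
      Real.summable_one_div_nat_rpow.mpr (by linarith)
    have h2 := (summable_nat_add_iff 1).mpr h1
    apply h2.congr
    intro n
    push_cast
    ring_nf
  apply Summable.of_nonneg_of_le (fun n => by positivity) (fun n => ?_) hsum
  have hn1 : (0:ℝ) < (n:ℝ)+1 := by positivity
  calc ((n:ℝ)+1) * |tt a b c q n|
      ≤ ((n:ℝ)+1) * (C / ((n:ℝ)+1) ^ (p + 2)) :=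
        mul_le_mul_of_nonneg_left (hC n) hn1.le
    _ = C * (1/((n:ℝ)+1) ^ (p+1)) := by
        rw [show p + 2 = 1 + (p+1) by ring, Real.rpow_add hn1, Real.rpow_one]
        field_simp
    _ ≤ C * (1/((n:ℝ)+1) ^ (p+1)) := le_refl _

lemma quad_tendsto (a b c q : ℝ) (ha : NotNonposInt a) (hb : NotNonposInt b)
    (h : a + b > c + q + 2) :
    Filter.Tendsto (fun n : ℕ => (((n:ℝ)+1)^2) * |tt a b c q n|)
      Filter.atTop (nhds 0) := by
  obtain ⟨C, hC0, hC⟩ := t_decay a b c q ha hb h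
  set p : ℝ := (a+b-c-q-2)/2 with hpdef
  have hp0 : 0 < p := by rw [hpdef]; linarith
  have hlim : Filter.Tendsto (fun n : ℕ => C * (((n:ℝ)+1) ^ (-p)))
      Filter.atTop (nhds 0) := by
    rw [show (0:ℝ) = C * 0 by ring]
    apply Filter.Tendsto.const_mul
    have h1 : Filter.Tendsto (fun n : ℕ => ((n:ℝ)+1)) Filter.atTop Filter.atTop :=
      Filter.tendsto_atTop_add_const_right _ 1 tendsto_natCast_atTop_atTop
    exact (tendsto_rpow_neg_atTop hp0).comp h1
  apply squeeze_zero (fun n => by positivity) (fun n => ?_) hlim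
  have hn1 : (0:ℝ) < (n:ℝ)+1 := by positivity
  calc (((n:ℝ)+1)^2) * |tt a b c q n|
      ≤ (((n:ℝ)+1)^2) * (C / ((n:ℝ)+1) ^ (p + 2)) :=
        mul_le_mul_of_nonneg_left (hC n) (by positivity)
    _ = C * (((n:ℝ)+1) ^ (-p)) := by
        rw [show p + 2 = -(-p) + 2 by ring]
        rw [Real.rpow_add hn1, ← Real.rpow_natCast ((n:ℝ)+1) 2]
        push_cast
        rw [Real.rpow_neg hn1.le, Real.rpow_neg hn1.le]
        field_simp

/-- If `a + b > c + q + 2`, then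
`(a−q−1)(b−q−1)·₃F₂(1,c,q;a,b;1) + q(a+b−c−2−q)·₃F₂(1,c,q+1;a,b;1) = (a−1)(b−1)`. -/
theorem stmt3 (a b c q : ℝ) (ha : NotNonposInt a) (hb : NotNonposInt b)
    (h : a + b > c + q + 2) :
    (a - q - 1) * (b - q - 1) * F32 1 c q a b 1
      + q * (a + b - c - 2 - q) * F32 1 c (q + 1) a b 1
      = (a - 1) * (b - 1) := by
  set t : ℕ → ℝ := tt a b c q with htdef
  set u : ℕ → ℝ := fun n => ((n:ℝ)+a-1)*((n:ℝ)+b-1) * t n with hudef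
  -- F32 rewrites
  have hF1 : F32 1 c q a b 1 = ∑' n : ℕ, t n := by
    unfold F32
    apply tsum_congr
    intro n
    have h1 := poch_ne_zero ha n
    have h2 := poch_ne_zero hb n
    have h3 : ((n.factorial : ℝ)) ≠ 0 := Nat.cast_ne_zero.mpr n.factorial_ne_zero
    rw [poch_one_eval, one_pow, mul_one, htdef]
    unfold tt
    field_simp
  have hF2 : q * F32 1 c (q+1) a b 1 = ∑' n : ℕ, (q+(n:ℝ)) * t n := by
    unfold F32
    rw [← tsum_mul_left]
    apply tsum_congr
    intro n
    have h1 := poch_ne_zero ha n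
    have h2 := poch_ne_zero hb n
    have h3 : ((n.factorial : ℝ)) ≠ 0 := Nat.cast_ne_zero.mpr n.factorial_ne_zero
    have key := poch_shift q n
    rw [poch_one_eval, one_pow, mul_one, htdef]
    unfold tt
    field_simp
    linear_combination (poch c n) * key
  -- summability
  have hlin := summable_linear a b c q ha hb h
  have hsum1 : Summable t := by
    apply Summable.of_norm
    apply Summable.of_nonneg_of_le (fun n => norm_nonneg _) (fun n => ?_) hlin
    have : (1:ℝ) ≤ (n:ℝ)+1 := by
      have := Nat.cast_nonneg (α := ℝ) n; linarith
    calc ‖t n‖ = 1 * |t n| := by rw [Real.norm_eq_abs, one_mul]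
      _ ≤ ((n:ℝ)+1) * |t n| := mul_le_mul_of_nonneg_right this (abs_nonneg _)
  have hsum2 : Summable (fun n : ℕ => (q+(n:ℝ)) * t n) := by
    apply Summable.of_norm
    apply Summable.of_nonneg_of_le (fun n => norm_nonneg _)
      (fun n => ?_) (hlin.mul_left (|q|+1))
    calc ‖(q+(n:ℝ)) * t n‖ = |q+(n:ℝ)| * |t n| := by
          rw [Real.norm_eq_abs, abs_mul]
      _ ≤ ((|q|+1) * ((n:ℝ)+1)) * |t n| := by
          apply mul_le_mul_of_nonneg_right _ (abs_nonneg _)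
          calc |q+(n:ℝ)| ≤ |q| + (n:ℝ) := by
                have := abs_add_le q ((n:ℝ))
                simpa [abs_of_nonneg (show (0:ℝ) ≤ (n:ℝ) by positivity)] using this
            _ ≤ (|q|+1) * ((n:ℝ)+1) := by nlinarith [abs_nonneg q, Nat.cast_nonneg (α := ℝ) n]
      _ = (|q|+1) * (((n:ℝ)+1) * |t n|) := by ring
  -- pointwise telescoping identity
  have hg : ∀ n : ℕ, (a-q-1)*(b-q-1) * t n + (a+b-c-2-q) * ((q+(n:ℝ)) * t n)
      = u n - u (n+1) := by
    intro n
    have h3 : a + (n:ℝ) ≠ 0 := fun hcon => ha n (by linarith)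
    have h4 : b + (n:ℝ) ≠ 0 := fun hcon => hb n (by linarith)
    have hsucc : u (n+1) = ((n:ℝ)+c)*((n:ℝ)+q) * t n := by
      rw [hudef]
      simp only []
      rw [htdef]
      rw [tt_succ ha hb n]
      push_cast
      field_simp
      ring
    rw [hsucc, hudef]
    simp only []
    ring
  -- u tends to 0
  have hu0 : Filter.Tendsto u Filter.atTop (nhds 0) := by
    have hq := quad_tendsto a b c q ha hb h
    set M : ℝ := (1+|a-1|)*(1+|b-1|) with hMdef
    have hM0 : 0 ≤ M := by positivity
    have hlim : Filter.Tendsto (fun n : ℕ => M * ((((n:ℝ)+1)^2) * |t n|))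
        Filter.atTop (nhds 0) := by
      rw [show (0:ℝ) = M * 0 by ring]
      exact hq.const_mul M
    apply squeeze_zero_norm (fun n => ?_) hlim
    have e1 : |(n:ℝ)+a-1| ≤ ((n:ℝ)+1) * (1+|a-1|) := by
      calc |(n:ℝ)+a-1| = |(n:ℝ) + (a-1)| := by ring_nf
        _ ≤ (n:ℝ) + |a-1| := by
            have := abs_add_le ((n:ℝ)) (a-1)
            simpa [abs_of_nonneg (show (0:ℝ) ≤ (n:ℝ) by positivity)] using this
        _ ≤ ((n:ℝ)+1) * (1+|a-1|) := by nlinarith [abs_nonneg (a-1), Nat.cast_nonneg (α := ℝ) n]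
    have e2 : |(n:ℝ)+b-1| ≤ ((n:ℝ)+1) * (1+|b-1|) := by
      calc |(n:ℝ)+b-1| = |(n:ℝ) + (b-1)| := by ring_nf
        _ ≤ (n:ℝ) + |b-1| := by
            have := abs_add_le ((n:ℝ)) (b-1)
            simpa [abs_of_nonneg (show (0:ℝ) ≤ (n:ℝ) by positivity)] using this
        _ ≤ ((n:ℝ)+1) * (1+|b-1|) := by nlinarith [abs_nonneg (b-1), Nat.cast_nonneg (α := ℝ) n]
    calc ‖u n‖ = |(n:ℝ)+a-1| * |(n:ℝ)+b-1| * |t n| := by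
          rw [hudef]; simp only [Real.norm_eq_abs, abs_mul]
      _ ≤ (((n:ℝ)+1) * (1+|a-1|)) * (((n:ℝ)+1) * (1+|b-1|)) * |t n| := by
          apply mul_le_mul_of_nonneg_right _ (abs_nonneg _)
          exact mul_le_mul e1 e2 (abs_nonneg _) (by positivity)
      _ = M * ((((n:ℝ)+1)^2) * |t n|) := by rw [hMdef]; ring
  -- telescoping sum
  have hsumg : Summable (fun n : ℕ => u n - u (n+1)) := by
    apply Summable.congr (f := fun n : ℕ => (a-q-1)*(b-q-1) * t n
      + (a+b-c-2-q) * ((q+(n:ℝ)) * t n))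
    · exact (hsum1.mul_left _).add (hsum2.mul_left _)
    · exact hg
  have htel : ∑' n : ℕ, (u n - u (n+1)) = u 0 := by
    have h1 := hsumg.hasSum.tendsto_sum_nat
    have h2 : Filter.Tendsto (fun N => ∑ i ∈ Finset.range N, (u i - u (i+1)))
        Filter.atTop (nhds (u 0 - 0)) := by
      have heq : (fun N => ∑ i ∈ Finset.range N, (u i - u (i+1)))
          = fun N => u 0 - u N := by
        funext N
        exact Finset.sum_range_sub' u N
      rw [heq]
      exact Filter.Tendsto.sub tendsto_const_nhds hu0
    have := tendsto_nhds_unique h1 h2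
    rw [this, sub_zero]
  -- assemble
  have hu0val : u 0 = (a-1)*(b-1) := by
    rw [hudef]
    simp only []
    rw [htdef]
    unfold tt
    simp [poch_zero]
  calc (a - q - 1) * (b - q - 1) * F32 1 c q a b 1
      + q * (a + b - c - 2 - q) * F32 1 c (q + 1) a b 1
      = (a - q - 1) * (b - q - 1) * (∑' n : ℕ, t n)
        + (a + b - c - 2 - q) * (q * F32 1 c (q+1) a b 1) := by rw [hF1]; ring
    _ = (a - q - 1) * (b - q - 1) * (∑' n : ℕ, t n)
        + (a + b - c - 2 - q) * (∑' n : ℕ, (q+(n:ℝ)) * t n) := by rw [hF2]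
    _ = (∑' n : ℕ, (a-q-1)*(b-q-1) * t n)
        + (∑' n : ℕ, (a+b-c-2-q) * ((q+(n:ℝ)) * t n)) := by rw [tsum_mul_left, tsum_mul_left]
    _ = ∑' n : ℕ, ((a-q-1)*(b-q-1) * t n + (a+b-c-2-q) * ((q+(n:ℝ)) * t n)) :=
        (Summable.tsum_add (hsum1.mul_left _) (hsum2.mul_left _)).symm
    _ = ∑' n : ℕ, (u n - u (n+1)) := tsum_congr hg
    _ = u 0 := htel
    _ = (a-1)*(b-1) := hu0val
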